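/- Let D be a maximal ASPD on a finite set A with n = |A| ≥ 4, let a_1, a_2 be its two bottom alternatives, and define D' := {ω_{A∖{a_1,a_2}} : ω ∈ D, ω(n) = a_1, ω(n−1) = a_2}. Then for all distinct x, y ∈ A∖{a_1,a_2}, both minima below exist and min{i : {x,y} = {ω(i), ω(i+1)} for some ω ∈ D} = min{i : {x,y} = {ω'(i), ω'(i+1)} for some ω' ∈ D'}; that is, a topmost contiguous occurrence of x and y in D appears in D'. -/

import Mathlib

variable {α : Type*} [DecidableEq α]

/-- Preferences (linear orders written as lists, most preferred first) on `A`. -/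
def PrefOn (A : Finset α) : Set (List α) :=
  {l | l.Nodup ∧ l.toFinset = A}

/-- Restriction of a preference to a subset `T`. -/
def restrictPref (l : List α) (T : Finset α) : List α :=
  l.filter (fun a => decide (a ∈ T))

/-- Arrow's single-peaked domain on `A`: for every triple `T ⊆ A` some `x ∈ T`
is never ranked last in the restriction of the domain to `T`. -/
def IsASPD (A : Finset α) (D : Set (List α)) : Prop :=
  D ⊆ PrefOn A ∧
    ∀ T : Finset α, T ⊆ A → T.card = 3 →
      ∃ x ∈ T, ∀ l ∈ D, (restrictPref l T).getLast? ≠ some x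

/-- Maximal Arrow's single-peaked domain on `A`. -/
def IsMaximalASPD (A : Finset α) (D : Set (List α)) : Prop :=
  IsASPD A D ∧ ∀ l ∈ PrefOn A, l ∉ D → ¬ IsASPD A (insert l D)

/-- The domain `D_i` obtained from `D` by restricting the preferences ending in
the bottom alternative `a` to `A ∖ {a}`. -/
def bottomRestrict (A : Finset α) (D : Set (List α)) (a : α) : Set (List α) :=
  {m | ∃ l ∈ D, l.getLast? = some a ∧ m = restrictPref l (A.erase a)}

/-- The domain `D_{ij}` obtained from `D` by restricting the preferences with
last alternative `a₁` and second-to-last alternative `a₂` to `A ∖ {a₁, a₂}`. -/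
def bottom2Restrict (A : Finset α) (D : Set (List α)) (a₁ a₂ : α) : Set (List α) :=
  {m | ∃ l ∈ D, l.getLast? = some a₁ ∧ l[A.card - 2]? = some a₂ ∧
    m = restrictPref l (A \ {a₁, a₂})}

/-- `x` and `y` occur contiguously at (0-based) position `i` in the list `l`. -/
def PairAt (l : List α) (x y : α) (i : ℕ) : Prop :=
  (l[i]? = some x ∧ l[i + 1]? = some y) ∨
    (l[i]? = some y ∧ l[i + 1]? = some x)


set_option linter.unusedSectionVars false


lemma restrict_append (l₁ l₂ : List α) (T : Finset α) :
    restrictPref (l₁ ++ l₂) T = restrictPref l₁ T ++ restrictPref l₂ T :=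
  List.filter_append _ _

lemma restrict_restrict (l : List α) {S T : Finset α} (h : T ⊆ S) :
    restrictPref (restrictPref l S) T = restrictPref l T := by
  unfold restrictPref
  rw [List.filter_filter]
  apply List.filter_congr
  intro a _
  by_cases hT : a ∈ T
  · simp [hT, h hT]
  · simp [hT]

lemma restrict_eq_self {l : List α} {T : Finset α} (h : ∀ a ∈ l, a ∈ T) :
    restrictPref l T = l := by
  apply List.filter_eq_self.mpr
  intro a ha; simpa using h a ha

lemma restrict_eq_nil {l : List α} {T : Finset α} (h : ∀ a ∈ l, a ∉ T) :
    restrictPref l T = [] := by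
  apply List.filter_eq_nil_iff.mpr
  intro a ha; simpa using h a ha

lemma restrict_toFinset (l : List α) (T : Finset α) :
    (restrictPref l T).toFinset = l.toFinset ∩ T := by
  ext a
  simp [restrictPref, List.mem_filter]

lemma restrict_nodup {l : List α} (h : l.Nodup) (T : Finset α) :
    (restrictPref l T).Nodup := h.filter _

lemma getLast?_restrict {l : List α} {a : α} {T : Finset α}
    (hl : l.getLast? = some a) (ha : a ∈ T) :
    (restrictPref l T).getLast? = some a := by
  obtain ⟨ys, rfl⟩ := List.getLast?_eq_some_iff.mp hl
  rw [restrict_append]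
  have h1 : restrictPref [a] T = [a] := restrict_eq_self (by simpa using ha)
  rw [h1, List.getLast?_concat]

lemma mem_of_getLast? {l : List α} {a : α} (hl : l.getLast? = some a) : a ∈ l := by
  obtain ⟨ys, rfl⟩ := List.getLast?_eq_some_iff.mp hl
  simp

lemma length_of_prefOn {A : Finset α} {l : List α} (h : l ∈ PrefOn A) :
    l.length = A.card := by
  obtain ⟨h1, h2⟩ := h
  rw [← h2, List.toFinset_card_of_nodup h1]

lemma mem_A_of_mem {A : Finset α} {l : List α} (h : l ∈ PrefOn A) {a : α} (ha : a ∈ l) :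
    a ∈ A := h.2 ▸ List.mem_toFinset.mpr ha

lemma concat2_getLast? (f : List α) (b a : α) : (f ++ [b, a]).getLast? = some a := by
  have : f ++ [b, a] = (f ++ [b]) ++ [a] := by simp
  rw [this, List.getLast?_concat]


lemma get?_append_left' {l t : List α} {j : ℕ} {v : α} (h : l[j]? = some v) :
    (l ++ t)[j]? = some v := by
  have hj : j < l.length := by
    rcases List.getElem?_eq_some_iff.mp h with ⟨hj, _⟩
    exact hj
  rw [List.getElem?_append_left hj]; exact h

lemma pairAt_append_left {l t : List α} {x y : α} {i : ℕ} (h : PairAt l x y i) :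
    PairAt (l ++ t) x y i := by
  rcases h with ⟨h1, h2⟩ | ⟨h1, h2⟩
  · exact Or.inl ⟨get?_append_left' h1, get?_append_left' h2⟩
  · exact Or.inr ⟨get?_append_left' h1, get?_append_left' h2⟩

lemma get?_concat2_fst (f : List α) (b a : α) : (f ++ [b, a])[f.length]? = some b := by
  rw [List.getElem?_append_right (le_refl _)]
  simp

lemma get?_concat2_snd (f : List α) (b a : α) : (f ++ [b, a])[f.length + 1]? = some a := by
  rw [List.getElem?_append_right (Nat.le_succ_of_le (le_refl _))]
  simp

lemma filter_pair_adj {l : List α} {p : α → Bool} {x y : α} {i : ℕ}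
    (hx : l[i]? = some x) (hy : l[i + 1]? = some y)
    (hpx : p x = true) (hpy : p y = true) :
    ∃ j ≤ i, (l.filter p)[j]? = some x ∧ (l.filter p)[j + 1]? = some y := by
  induction l generalizing i with
  | nil => simp at hx
  | cons a t ih =>
    cases i with
    | zero =>
      have hax : a = x := by simpa using hx
      subst hax
      cases t with
      | nil => simp at hy
      | cons b t' =>
        have hby : b = y := by simpa using hy
        subst hby
        have heq : List.filter p (a :: b :: t') = a :: b :: List.filter p t' := by
          rw [List.filter_cons_of_pos hpx, List.filter_cons_of_pos hpy]
        refine ⟨0, le_refl 0, ?_, ?_⟩ <;> simp [heq]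
    | succ i' =>
      have hx' : t[i']? = some x := by simpa using hx
      have hy' : t[i' + 1]? = some y := by simpa using hy
      obtain ⟨j, hj, h1, h2⟩ := ih hx' hy'
      by_cases hpa : p a = true
      · have heq : List.filter p (a :: t) = a :: List.filter p t :=
          List.filter_cons_of_pos hpa
        exact ⟨j + 1, Nat.succ_le_succ hj,
          by rw [heq]; simpa using h1, by rw [heq]; simpa using h2⟩
      · have heq : List.filter p (a :: t) = List.filter p t :=
          List.filter_cons_of_neg (by simp [hpa])
        exact ⟨j, le_trans hj (Nat.le_succ _), by rw [heq]; exact h1,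
          by rw [heq]; exact h2⟩

lemma pairAt_filter {l : List α} {p : α → Bool} {x y : α} {i : ℕ}
    (h : PairAt l x y i) (hpx : p x = true) (hpy : p y = true) :
    ∃ j ≤ i, PairAt (l.filter p) x y j := by
  rcases h with ⟨h1, h2⟩ | ⟨h1, h2⟩
  · obtain ⟨j, hj, g1, g2⟩ := filter_pair_adj h1 h2 hpx hpy
    exact ⟨j, hj, Or.inl ⟨g1, g2⟩⟩
  · obtain ⟨j, hj, g1, g2⟩ := filter_pair_adj h1 h2 hpy hpx
    exact ⟨j, hj, Or.inr ⟨g1, g2⟩⟩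

lemma mem_of_addOK {A : Finset α} {D : Set (List α)} {l' : List α}
    (hD : IsMaximalASPD A D) (h1 : l' ∈ PrefOn A)
    (h2 : ∀ T : Finset α, T ⊆ A → T.card = 3 →
      ∃ x ∈ T, (restrictPref l' T).getLast? ≠ some x ∧
        ∀ l ∈ D, (restrictPref l T).getLast? ≠ some x) :
    l' ∈ D := by
  by_contra hl'
  apply hD.2 l' h1 hl'
  constructor
  · exact Set.insert_subset h1 hD.1.1
  · intro T hT hT3
    obtain ⟨x, hx, hx1, hx2⟩ := h2 T hT hT3
    refine ⟨x, hx, ?_⟩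
    rintro l (rfl | hl)
    · exact hx1
    · exact hx2 l hl

/-- The "star" construction: move `a₂, a₁` to the bottom. -/
lemma star_mem {A : Finset α} {D : Set (List α)} (hD : IsMaximalASPD A D)
    {a₁ a₂ : α} (hne : a₁ ≠ a₂)
    (hb₁ : ∃ l ∈ D, l.getLast? = some a₁) (hb₂ : ∃ l ∈ D, l.getLast? = some a₂)
    {l : List α} (hl : l ∈ D) :
    restrictPref l (A \ {a₁, a₂}) ++ [a₂, a₁] ∈ D := by
  obtain ⟨l₁, hl₁D, hl₁⟩ := hb₁
  obtain ⟨l₂, hl₂D, hl₂⟩ := hb₂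
  have hlp : l ∈ PrefOn A := hD.1.1 hl
  have ha₁A : a₁ ∈ A := mem_A_of_mem (hD.1.1 hl₁D) (mem_of_getLast? hl₁)
  have ha₂A : a₂ ∈ A := mem_A_of_mem (hD.1.1 hl₂D) (mem_of_getLast? hl₂)
  set f := restrictPref l (A \ {a₁, a₂}) with hf
  have hfmem : ∀ a ∈ f, a ∈ A \ {a₁, a₂} := by
    intro a ha
    have := List.mem_filter.mp ha
    simpa using this.2
  have hstar_pref : f ++ [a₂, a₁] ∈ PrefOn A := by
    constructor
    · apply List.Nodup.append
      · exact restrict_nodup hlp.1 _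
      · simp [hne, Ne.symm hne]
      · intro a haf hamem
        have := hfmem a haf
        simp at hamem this
        rcases hamem with rfl | rfl
        · exact this.2.2 rfl
        · exact this.2.1 rfl
    · ext b
      simp only [List.toFinset_append, Finset.mem_union, List.mem_toFinset]
      constructor
      · rintro (hb | hb)
        · exact (Finset.mem_sdiff.mp (hfmem b hb)).1
        · simp at hb
          rcases hb with rfl | rfl
          · exact ha₂A
          · exact ha₁A
      · intro hbA
        by_cases hb1 : b = a₁
        · subst hb1; right; simp
        by_cases hb2 : b = a₂
        · subst hb2; right; simp
        left
        rw [hf]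
        unfold restrictPref
        rw [List.mem_filter]
        refine ⟨?_, by simp [hb1, hb2, hbA]⟩
        rw [← List.mem_toFinset, hlp.2]; exact hbA
  apply mem_of_addOK hD hstar_pref
  intro T hT hT3
  by_cases h₁ : a₁ ∈ T
  · obtain ⟨x, hxT, hx⟩ := hD.1.2 T hT hT3
    refine ⟨x, hxT, ?_, hx⟩
    have hlast : (restrictPref (f ++ [a₂, a₁]) T).getLast? = some a₁ :=
      getLast?_restrict (concat2_getLast? f a₂ a₁) h₁
    rw [hlast]
    intro heq
    exact hx l₁ hl₁D (by rw [getLast?_restrict hl₁ h₁]; exact heq)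
  · by_cases h₂ : a₂ ∈ T
    · obtain ⟨x, hxT, hx⟩ := hD.1.2 T hT hT3
      refine ⟨x, hxT, ?_, hx⟩
      have htail : restrictPref [a₂, a₁] T = [a₂] := by
        unfold restrictPref
        simp [h₁, h₂, List.filter]
      have hlast : (restrictPref (f ++ [a₂, a₁]) T).getLast? = some a₂ := by
        rw [restrict_append, htail, List.getLast?_concat]
      rw [hlast]
      intro heq
      exact hx l₂ hl₂D (by rw [getLast?_restrict hl₂ h₂]; exact heq)
    · obtain ⟨x, hxT, hx⟩ := hD.1.2 T hT hT3
      refine ⟨x, hxT, ?_, hx⟩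
      have hTsub : T ⊆ A \ {a₁, a₂} := by
        intro a ha
        simp only [Finset.mem_sdiff, Finset.mem_insert, Finset.mem_singleton]
        refine ⟨hT ha, ?_⟩
        rintro (rfl | rfl)
        · exact h₁ ha
        · exact h₂ ha
      have htail : restrictPref [a₂, a₁] T = [] := by
        unfold restrictPref
        simp [h₁, h₂, List.filter]
      have : restrictPref (f ++ [a₂, a₁]) T = restrictPref l T := by
        rw [restrict_append, htail, List.append_nil, hf, restrict_restrict _ hTsub]
      rw [this]
      exact hx l hl

/-- Every order of a maximal-type ASPD with two bottoms ends in one of them. -/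
lemma ends_bottom {A : Finset α} {D : Set (List α)} (hD : IsASPD A D)
    {a₁ a₂ : α} (hne : a₁ ≠ a₂)
    (hb₁ : ∃ l ∈ D, l.getLast? = some a₁) (hb₂ : ∃ l ∈ D, l.getLast? = some a₂)
    {l : List α} (hl : l ∈ D) :
    l.getLast? = some a₁ ∨ l.getLast? = some a₂ := by
  obtain ⟨l₁, hl₁D, hl₁⟩ := hb₁
  obtain ⟨l₂, hl₂D, hl₂⟩ := hb₂
  have hlp : l ∈ PrefOn A := hD.1 hl
  have ha₁A : a₁ ∈ A := mem_A_of_mem (hD.1 hl₁D) (mem_of_getLast? hl₁)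
  have ha₂A : a₂ ∈ A := mem_A_of_mem (hD.1 hl₂D) (mem_of_getLast? hl₂)
  by_contra hcon
  push_neg at hcon
  obtain ⟨hc1, hc2⟩ := hcon
  have hlne : l ≠ [] := by
    rintro rfl
    have h0 : A.card = 0 := by rw [← length_of_prefOn hlp]; rfl
    rw [Finset.card_eq_zero] at h0
    subst h0
    exact absurd ha₁A (by simp)
  set c := l.getLast hlne with hcdef
  have hc : l.getLast? = some c := List.getLast?_eq_getLast hlne
  have hcA : c ∈ A := mem_A_of_mem hlp (mem_of_getLast? hc)
  have hca₁ : c ≠ a₁ := fun h => hc1 (by rw [hc, h])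
  have hca₂ : c ≠ a₂ := fun h => hc2 (by rw [hc, h])
  set T : Finset α := {a₁, a₂, c} with hT
  have hTA : T ⊆ A := by
    intro a ha
    simp only [hT, Finset.mem_insert, Finset.mem_singleton] at ha
    rcases ha with rfl | rfl | rfl <;> assumption
  have hT3 : T.card = 3 := by
    rw [hT, Finset.card_insert_of_notMem (by simp [hne, hca₁.symm]),
      Finset.card_insert_of_notMem (by simp [hca₂.symm]), Finset.card_singleton]
  obtain ⟨x, hxT, hx⟩ := hD.2 T hTA hT3
  have hxa₁ : x ≠ a₁ := by
    intro h; subst h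
    exact hx l₁ hl₁D (getLast?_restrict hl₁ (by simp [hT]))
  have hxa₂ : x ≠ a₂ := by
    intro h; subst h
    exact hx l₂ hl₂D (getLast?_restrict hl₂ (by simp [hT]))
  have hxc : x ≠ c := by
    intro h; subst h
    exact hx l hl (getLast?_restrict hc (by simp [hT]))
  simp only [hT, Finset.mem_insert, Finset.mem_singleton] at hxT
  rcases hxT with rfl | rfl | rfl
  · exact hxa₁ rfl
  · exact hxa₂ rfl
  · exact hxc rfl

/-- A maximal ASPD is nonempty. -/
lemma maximal_nonempty {A : Finset α} {D : Set (List α)} (hD : IsMaximalASPD A D) :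
    D.Nonempty := by
  by_contra h
  rw [Set.not_nonempty_iff_eq_empty] at h
  subst h
  set l₀ := A.toList with hl₀
  have hl₀p : l₀ ∈ PrefOn A := ⟨A.nodup_toList, by simp [hl₀]⟩
  apply hD.2 l₀ hl₀p (by simp)
  constructor
  · intro l hl
    rcases hl with rfl | hl
    · exact hl₀p
    · exact absurd hl (by simp)
  · intro T hT hT3
    rcases h2 : (restrictPref l₀ T).getLast? with _ | b
    · have hTne : T.Nonempty := by
        rw [← Finset.card_pos, hT3]; norm_num
      obtain ⟨x, hx⟩ := hTne
      refine ⟨x, hx, ?_⟩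
      rintro l (rfl | hl)
      · simp [h2]
      · exact absurd hl (by simp)
    · have hbT : b ∈ T := by
        have hbmem : b ∈ restrictPref l₀ T := mem_of_getLast? h2
        have := List.mem_filter.mp hbmem
        simpa using this.2
      obtain ⟨x, hxT, hxb⟩ := Finset.exists_mem_ne (by rw [hT3]; norm_num) b
      refine ⟨x, hxT, ?_⟩
      rintro l (rfl | hl)
      · rw [h2]; intro heq; exact hxb (Option.some_injective _ heq).symm
      · exact absurd hl (by simp)

lemma two_decomp {l : List α} {b : α} (hl : l.getLast? = some b) (h2 : 2 ≤ l.length) :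
    ∃ zs u, l = zs ++ [u, b] := by
  obtain ⟨ys, rfl⟩ := List.getLast?_eq_some_iff.mp hl
  have hys : ys ≠ [] := by
    rintro rfl; simp at h2
  obtain ⟨zs, hzs⟩ := List.getLast?_eq_some_iff.mp (List.getLast?_eq_getLast hys)
  refine ⟨zs, ys.getLast hys, ?_⟩
  conv_lhs => rw [hzs]
  simp

/-- A maximal ASPD on at least 3 alternatives has two distinct bottom alternatives. -/
lemma exists_two_bottoms {A : Finset α} {D : Set (List α)} (hD : IsMaximalASPD A D)
    (h3 : 3 ≤ A.card) :
    ∃ b₁ b₂ : α, b₁ ≠ b₂ ∧ (∃ l ∈ D, l.getLast? = some b₁) ∧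
      (∃ l ∈ D, l.getLast? = some b₂) := by
  obtain ⟨l, hl⟩ := maximal_nonempty hD
  have hlp : l ∈ PrefOn A := hD.1.1 hl
  have hlen : l.length = A.card := length_of_prefOn hlp
  have hlne : l ≠ [] := by
    intro h; rw [h] at hlen; simp at hlen; omega
  set b₁ := l.getLast hlne with hb₁def
  have hb₁ : l.getLast? = some b₁ := List.getLast?_eq_getLast hlne
  by_cases hall : ∀ l' ∈ D, l'.getLast? = some b₁
  · exfalso
    obtain ⟨zs, u, hdec⟩ := two_decomp hb₁ (by omega)
    have hnd : l.Nodup := hlp.1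
    have hub : u ≠ b₁ := by
      have hsub : [u, b₁].Sublist l := hdec ▸ List.sublist_append_right zs [u, b₁]
      have hnd2 : [u, b₁].Nodup := hsub.nodup hnd
      simpa using hnd2
    set l' := zs ++ [b₁, u] with hl'def
    have hperm : l.Perm l' := by
      rw [hdec]
      exact List.Perm.append_left zs (List.Perm.swap b₁ u [])
    have hl'p : l' ∈ PrefOn A := by
      refine ⟨hperm.nodup_iff.mp hnd, ?_⟩
      ext a
      rw [List.mem_toFinset, ← hperm.mem_iff, ← List.mem_toFinset, hlp.2]
    have hmem : l' ∈ D := by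
      apply mem_of_addOK hD hl'p
      intro T hT hT3
      by_cases huT : u ∈ T
      case pos =>
        by_cases hbT : b₁ ∈ T
        case neg =>
          obtain ⟨x, hxT, hx⟩ := hD.1.2 T hT hT3
          refine ⟨x, hxT, ?_, hx⟩
          have htaileq : restrictPref [b₁, u] T = restrictPref [u, b₁] T := by
            unfold restrictPref
            simp [huT, hbT, List.filter]
          have heq : restrictPref l' T = restrictPref l T := by
            rw [hl'def, hdec, restrict_append, restrict_append, htaileq]
          rw [heq]; exact hx l hl
        case pos =>
          have hnsub : ¬ T ⊆ ({u, b₁} : Finset α) := by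
            intro hsub
            have hc1 := Finset.card_le_card hsub
            have hc2 : ({u, b₁} : Finset α).card ≤ 2 :=
              le_trans (Finset.card_insert_le u {b₁}) (by simp)
            omega
          obtain ⟨c, hcT, hc⟩ := Finset.not_subset.mp hnsub
          have hcu : c ≠ u := fun h => hc (by simp [h])
          have hcb : c ≠ b₁ := fun h => hc (by simp [h])
          refine ⟨c, hcT, ?_, ?_⟩
          · have htail : restrictPref [b₁, u] T = [b₁, u] := restrict_eq_self (by
              intro a ha
              simp at ha
              rcases ha with rfl | rfl <;> assumption)
            have heq : restrictPref l' T = restrictPref zs T ++ [b₁, u] := by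
              rw [hl'def, restrict_append, htail]
            rw [heq, concat2_getLast?]
            intro h; exact hcu (Option.some_injective _ h).symm
          · intro l'' hl''
            rw [getLast?_restrict (hall l'' hl'') hbT]
            intro h; exact hcb (Option.some_injective _ h).symm
      case neg =>
        obtain ⟨x, hxT, hx⟩ := hD.1.2 T hT hT3
        refine ⟨x, hxT, ?_, hx⟩
        have htaileq : restrictPref [b₁, u] T = restrictPref [u, b₁] T := by
          unfold restrictPref
          by_cases hbT : b₁ ∈ T <;> simp [huT, hbT, List.filter]
        have heq : restrictPref l' T = restrictPref l T := by
          rw [hl'def, hdec, restrict_append, restrict_append, htaileq]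
        rw [heq]; exact hx l hl
    have hfin := hall l' hmem
    rw [hl'def, concat2_getLast?] at hfin
    exact hub (Option.some_injective _ hfin)
  · push_neg at hall
    obtain ⟨l₂, hl₂D, hl₂⟩ := hall
    have hl₂ne : l₂ ≠ [] := by
      intro h
      rw [h] at hl₂
      have : l₂.length = A.card := length_of_prefOn (hD.1.1 hl₂D)
      rw [h] at this; simp at this; omega
    refine ⟨b₁, l₂.getLast hl₂ne, ?_, ⟨l, hl, hb₁⟩, ⟨l₂, hl₂D, List.getLast?_eq_getLast hl₂ne⟩⟩
    intro h
    exact hl₂ (by rw [List.getLast?_eq_getLast hl₂ne, ← h])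

lemma restrict_erase_decomp {A : Finset α} {l : List α} {b : α}
    (hlp : l ∈ PrefOn A) (hl : l.getLast? = some b) :
    l = restrictPref l (A.erase b) ++ [b] := by
  obtain ⟨ys, hys⟩ := List.getLast?_eq_some_iff.mp hl
  have hbys : b ∉ ys := by
    have hnd := hlp.1
    rw [hys] at hnd
    have hdisj := List.disjoint_of_nodup_append hnd
    intro hb
    exact hdisj hb (by simp)
  have h1 : restrictPref l (A.erase b) = ys := by
    conv_lhs => rw [hys]
    rw [restrict_append]
    have h2 : restrictPref [b] (A.erase b) = [] := restrict_eq_nil (by simp)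
    rw [h2, List.append_nil]
    apply restrict_eq_self
    intro a ha
    rw [Finset.mem_erase]
    exact ⟨fun h => hbys (h ▸ ha),
      mem_A_of_mem hlp (by rw [hys]; exact List.mem_append_left _ ha)⟩
  rw [h1]
  exact hys

lemma bottom_transfer {A : Finset α} {D : Set (List α)} (hD : IsMaximalASPD A D)
    {b₁ b₂ : α} (hne : b₁ ≠ b₂)
    (hb₁ : ∃ l ∈ D, l.getLast? = some b₁) (hb₂ : ∃ l ∈ D, l.getLast? = some b₂)
    {l : List α} (hl : l ∈ D) {T : Finset α} (hTA : T ⊆ A) (hbT : b₁ ∉ T) :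
    ∃ l'' ∈ D, l''.getLast? = some b₁ ∧
      (restrictPref l'' T).getLast? = (restrictPref l T).getLast? := by
  rcases ends_bottom hD.1 hne hb₁ hb₂ hl with hend | hend
  · exact ⟨l, hl, hend, rfl⟩
  · refine ⟨restrictPref l (A \ {b₁, b₂}) ++ [b₂, b₁], star_mem hD hne hb₁ hb₂ hl,
      concat2_getLast? _ _ _, ?_⟩
    by_cases h₂ : b₂ ∈ T
    · have htail : restrictPref [b₂, b₁] T = [b₂] := by
        unfold restrictPref; simp [hbT, h₂, List.filter]
      rw [restrict_append, htail, List.getLast?_concat, getLast?_restrict hend h₂]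
    · have hTsub : T ⊆ A \ {b₁, b₂} := by
        intro a ha
        simp only [Finset.mem_sdiff, Finset.mem_insert, Finset.mem_singleton]
        refine ⟨hTA ha, ?_⟩
        rintro (rfl | rfl)
        · exact hbT ha
        · exact h₂ ha
      have htail : restrictPref [b₂, b₁] T = [] := by
        unfold restrictPref; simp [hbT, h₂, List.filter]
      rw [restrict_append, htail, List.append_nil, restrict_restrict _ hTsub]

lemma bottomRestrict_maximal {A : Finset α} {D : Set (List α)} (hD : IsMaximalASPD A D)
    {b₁ b₂ : α} (hne : b₁ ≠ b₂)
    (hb₁ : ∃ l ∈ D, l.getLast? = some b₁) (hb₂ : ∃ l ∈ D, l.getLast? = some b₂) :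
    IsMaximalASPD (A.erase b₁) (bottomRestrict A D b₁) := by
  obtain ⟨l₁, hl₁D, hl₁⟩ := hb₁
  have hb₁' : ∃ l ∈ D, l.getLast? = some b₁ := ⟨l₁, hl₁D, hl₁⟩
  have hb₁A : b₁ ∈ A := mem_A_of_mem (hD.1.1 hl₁D) (mem_of_getLast? hl₁)
  have hsub : bottomRestrict A D b₁ ⊆ PrefOn (A.erase b₁) := by
    rintro m ⟨l, hlD, hlast, rfl⟩
    have hlp := hD.1.1 hlD
    refine ⟨restrict_nodup hlp.1 _, ?_⟩
    rw [restrict_toFinset, hlp.2]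
    exact Finset.inter_eq_right.mpr (Finset.erase_subset _ _)
  have haspd : IsASPD (A.erase b₁) (bottomRestrict A D b₁) := by
    refine ⟨hsub, ?_⟩
    intro T hT hT3
    have hTA : T ⊆ A := hT.trans (Finset.erase_subset _ _)
    obtain ⟨x, hxT, hx⟩ := hD.1.2 T hTA hT3
    refine ⟨x, hxT, ?_⟩
    rintro m ⟨l, hlD, hlast, rfl⟩
    rw [restrict_restrict _ hT]
    exact hx l hlD
  refine ⟨haspd, ?_⟩
  intro m hmp hmD hins
  set l' := m ++ [b₁] with hl'def
  have hl'p : l' ∈ PrefOn A := by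
    constructor
    · refine List.Nodup.append hmp.1 (by simp) ?_
      intro a ham hab
      simp only [List.mem_singleton] at hab
      subst hab
      have hmem : a ∈ A.erase a := by
        rw [← hmp.2]; exact List.mem_toFinset.mpr ham
      simp at hmem
    · ext a
      simp only [hl'def, List.toFinset_append, Finset.mem_union, List.mem_toFinset]
      constructor
      · rintro (h | h)
        · exact (Finset.mem_erase.mp (mem_A_of_mem hmp h)).2
        · have : a = b₁ := by simpa using h
          subst this; exact hb₁A
      · intro haA
        by_cases hab : a = b₁
        · right; simp [hab]
        · left; rw [← List.mem_toFinset, hmp.2]; exact Finset.mem_erase.mpr ⟨hab, haA⟩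
  have hl'D : l' ∈ D := by
    apply mem_of_addOK hD hl'p
    intro T hTA hT3
    by_cases hbT : b₁ ∈ T
    · obtain ⟨x, hxT, hx⟩ := hD.1.2 T hTA hT3
      refine ⟨x, hxT, ?_, hx⟩
      rw [getLast?_restrict (show l'.getLast? = some b₁ from List.getLast?_concat (l := m)) hbT]
      intro h
      exact hx l₁ hl₁D (by rw [getLast?_restrict hl₁ hbT]; exact h)
    · have hTe : T ⊆ A.erase b₁ := fun a ha =>
        Finset.mem_erase.mpr ⟨fun h => hbT (h ▸ ha), hTA ha⟩
      obtain ⟨x, hxT, hx⟩ := hins.2 T hTe hT3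
      refine ⟨x, hxT, ?_, ?_⟩
      · have heq : restrictPref l' T = restrictPref m T := by
          rw [hl'def, restrict_append,
            restrict_eq_nil (l := [b₁]) (by simp [hbT]), List.append_nil]
        rw [heq]
        exact hx m (Set.mem_insert _ _)
      · intro l hlD
        obtain ⟨l'', hl''D, hl''last, hl''eq⟩ :=
          bottom_transfer hD hne hb₁' hb₂ hlD hTA hbT
        rw [← hl''eq, ← restrict_restrict l'' hTe]
        exact hx _ (Set.mem_insert_of_mem _ ⟨l'', hl''D, hl''last, rfl⟩)
  apply hmD
  refine ⟨l', hl'D, List.getLast?_concat (l := m), ?_⟩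
  have heq : restrictPref l' (A.erase b₁) = m := by
    rw [hl'def, restrict_append,
      restrict_eq_nil (l := [b₁]) (T := A.erase b₁) (by simp), List.append_nil]
    apply restrict_eq_self
    intro a ha
    rw [← List.mem_toFinset, hmp.2] at ha
    exact ha
  exact heq.symm

lemma pair_adj : ∀ n : ℕ, ∀ (A : Finset α) (D : Set (List α)), A.card = n →
    IsMaximalASPD A D → 2 ≤ A.card → ∀ x y : α, x ∈ A → y ∈ A → x ≠ y →
    ∃ l ∈ D, ∃ i, PairAt l x y i := by
  intro n
  induction n using Nat.strong_induction_on with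
  | _ n IH =>
    intro A D hn hD h2 x y hxA hyA hxy
    rcases eq_or_lt_of_le h2 with h2' | h3
    · -- |A| = 2
      obtain ⟨l, hl⟩ := maximal_nonempty hD
      have hlp := hD.1.1 hl
      have hlen : l.length = 2 := by rw [length_of_prefOn hlp, ← h2']
      rcases l with _ | ⟨c, l⟩
      · simp at hlen
      rcases l with _ | ⟨d, l⟩
      · simp at hlen
      rcases l with _ | ⟨e, l⟩
      · have hx' : x = c ∨ x = d := by
          have h := hxA; rw [← hlp.2] at h; simpa using h
        have hy' : y = c ∨ y = d := by
          have h := hyA; rw [← hlp.2] at h; simpa using h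
        refine ⟨[c, d], hl, 0, ?_⟩
        rcases hx' with rfl | rfl <;> rcases hy' with rfl | rfl
        · exact absurd rfl hxy
        · exact Or.inl ⟨rfl, rfl⟩
        · exact Or.inr ⟨rfl, rfl⟩
        · exact absurd rfl hxy
      · simp at hlen
    · have h3' : 3 ≤ A.card := h3
      obtain ⟨b₁, b₂, hbne, hb₁, hb₂⟩ := exists_two_bottoms hD h3'
      have key : ∀ b c : α, b ≠ c → (∃ l ∈ D, l.getLast? = some b) →
          (∃ l ∈ D, l.getLast? = some c) → x ≠ b → y ≠ b →
          ∃ l ∈ D, ∃ i, PairAt l x y i := by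
        intro b c hbc hb hc hxb hyb
        have hmax := bottomRestrict_maximal hD hbc hb hc
        have hbA : b ∈ A := by
          obtain ⟨lb, hlbD, hlb⟩ := hb
          exact mem_A_of_mem (hD.1.1 hlbD) (mem_of_getLast? hlb)
        have hcard : (A.erase b).card = n - 1 := by
          rw [Finset.card_erase_of_mem hbA, hn]
        have hlt : n - 1 < n := by omega
        have h2'' : 2 ≤ (A.erase b).card := by rw [hcard]; omega
        obtain ⟨m, hm, i, hpair⟩ := IH (n - 1) hlt (A.erase b) _ hcard hmax h2'' x y
          (Finset.mem_erase.mpr ⟨hxb, hxA⟩) (Finset.mem_erase.mpr ⟨hyb, hyA⟩) hxy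
        obtain ⟨l, hlD, hlast, rfl⟩ := hm
        refine ⟨l, hlD, i, ?_⟩
        have hdec := restrict_erase_decomp (hD.1.1 hlD) hlast
        have hp2 := pairAt_append_left (t := [b]) hpair
        rw [← hdec] at hp2
        exact hp2
      by_cases hx1 : x = b₁
      · subst hx1
        by_cases hy2 : y = b₂
        · subst hy2
          obtain ⟨l, hl⟩ := maximal_nonempty hD
          exact ⟨restrictPref l (A \ {x, y}) ++ [y, x], star_mem hD hbne hb₁ hb₂ hl,
            (restrictPref l (A \ {x, y})).length,
            Or.inr ⟨get?_concat2_fst _ _ _, get?_concat2_snd _ _ _⟩⟩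
        · exact key b₂ x (Ne.symm hbne) hb₂ hb₁ hbne hy2
      · by_cases hy1 : y = b₁
        · subst hy1
          by_cases hx2 : x = b₂
          · subst hx2
            obtain ⟨l, hl⟩ := maximal_nonempty hD
            exact ⟨restrictPref l (A \ {y, x}) ++ [x, y], star_mem hD hbne hb₁ hb₂ hl,
              (restrictPref l (A \ {y, x})).length,
              Or.inl ⟨get?_concat2_fst _ _ _, get?_concat2_snd _ _ _⟩⟩
          · exact key b₂ y (Ne.symm hbne) hb₂ hb₁ hx2 hbne
        · exact key b₁ b₂ hbne hb₁ hb₂ hx1 hy1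

lemma restrict_length {A : Finset α} {l : List α} (hlp : l ∈ PrefOn A) (T : Finset α) :
    (restrictPref l T).length = (A ∩ T).card := by
  rw [← List.toFinset_card_of_nodup (restrict_nodup hlp.1 T), restrict_toFinset, hlp.2]

lemma bottom2_decomp {A : Finset α} {l : List α} {a₁ a₂ : α}
    (hlp : l ∈ PrefOn A) (h2 : 2 ≤ A.card)
    (hlast : l.getLast? = some a₁) (hsec : l[A.card - 2]? = some a₂) :
    l = restrictPref l (A \ {a₁, a₂}) ++ [a₂, a₁] := by
  obtain ⟨ys, hys⟩ := List.getLast?_eq_some_iff.mp hlast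
  have hlen : l.length = A.card := length_of_prefOn hlp
  have hyslen : ys.length = A.card - 1 := by
    rw [hys] at hlen; simp at hlen; omega
  have hsec' : ys[A.card - 2]? = some a₂ := by
    rw [hys, List.getElem?_append_left (by omega)] at hsec
    exact hsec
  have hys2 : ys.getLast? = some a₂ := by
    rw [List.getLast?_eq_getElem?, hyslen,
      show A.card - 1 - 1 = A.card - 2 by omega]
    exact hsec'
  obtain ⟨zs, hzs⟩ := List.getLast?_eq_some_iff.mp hys2
  have hldec : l = zs ++ [a₂, a₁] := by
    rw [hys, hzs]; simp
  have hnd : l.Nodup := hlp.1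
  have hdisj : ∀ a ∈ zs, a ≠ a₂ ∧ a ≠ a₁ := by
    intro a ha
    have hnd2 := hldec ▸ hnd
    have hdis := List.disjoint_of_nodup_append hnd2
    constructor
    · intro h; exact hdis ha (by simp [h])
    · intro h; exact hdis ha (by simp [h])
  have hres : restrictPref l (A \ {a₁, a₂}) = zs := by
    conv_lhs => rw [hldec]
    rw [restrict_append, restrict_eq_nil (l := [a₂, a₁]) (by simp), List.append_nil]
    apply restrict_eq_self
    intro a ha
    have hmem : a ∈ A := mem_A_of_mem hlp (by rw [hldec]; exact List.mem_append_left _ ha)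
    have := hdisj a ha
    simp only [Finset.mem_sdiff, Finset.mem_insert, Finset.mem_singleton]
    refine ⟨hmem, ?_⟩
    rintro (rfl | rfl)
    · exact this.2 rfl
    · exact this.1 rfl
  rw [hres]
  exact hldec


/-- In a maximal Arrow's single-peaked domain `D` on at least four alternatives
with bottom alternatives `a₁, a₂`, a topmost contiguous occurrence of any two
distinct `x, y ∈ A ∖ {a₁, a₂}` appears in the split domain `D'`. -/
theorem topmost_contiguous_in_split (A : Finset α) (D : Set (List α))
    (hD : IsMaximalASPD A D) (hA : 4 ≤ A.card) (a₁ a₂ : α) (hne : a₁ ≠ a₂)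
    (hb₁ : ∃ l ∈ D, l.getLast? = some a₁) (hb₂ : ∃ l ∈ D, l.getLast? = some a₂)
    (x y : α) (hx : x ∈ A \ {a₁, a₂}) (hy : y ∈ A \ {a₁, a₂}) (hxy : x ≠ y) :
    {i : ℕ | ∃ l ∈ D, PairAt l x y i}.Nonempty ∧
    {i : ℕ | ∃ l ∈ bottom2Restrict A D a₁ a₂, PairAt l x y i}.Nonempty ∧
    sInf {i : ℕ | ∃ l ∈ D, PairAt l x y i} =
      sInf {i : ℕ | ∃ l ∈ bottom2Restrict A D a₁ a₂, PairAt l x y i} := by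
  have hxA : x ∈ A := (Finset.mem_sdiff.mp hx).1
  have hyA : y ∈ A := (Finset.mem_sdiff.mp hy).1
  have ha₁A : a₁ ∈ A := by
    obtain ⟨l₁, hl₁D, hl₁⟩ := hb₁
    exact mem_A_of_mem (hD.1.1 hl₁D) (mem_of_getLast? hl₁)
  have ha₂A : a₂ ∈ A := by
    obtain ⟨l₂, hl₂D, hl₂⟩ := hb₂
    exact mem_A_of_mem (hD.1.1 hl₂D) (mem_of_getLast? hl₂)
  set S : Set ℕ := {i : ℕ | ∃ l ∈ D, PairAt l x y i} with hSdef
  set S' : Set ℕ := {i : ℕ | ∃ l ∈ bottom2Restrict A D a₁ a₂, PairAt l x y i} with hS'def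
  have hS : S.Nonempty := by
    obtain ⟨l, hl, i, hp⟩ := pair_adj A.card A D rfl hD (by omega) x y hxA hyA hxy
    exact ⟨i, l, hl, hp⟩
  have hi₀ : sInf S ∈ S := Nat.sInf_mem hS
  obtain ⟨l, hlD, hp⟩ := hi₀
  have hlstar := star_mem hD hne hb₁ hb₂ hlD
  set f := restrictPref l (A \ {a₁, a₂}) with hfdef
  have hpx : (fun a => decide (a ∈ A \ ({a₁, a₂} : Finset α))) x = true := by
    simp only [decide_eq_true_eq]; exact hx
  have hpy : (fun a => decide (a ∈ A \ ({a₁, a₂} : Finset α))) y = true := by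
    simp only [decide_eq_true_eq]; exact hy
  obtain ⟨j, hj, hpf⟩ := pairAt_filter (p := fun a => decide (a ∈ A \ ({a₁, a₂} : Finset α))) hp hpx hpy
  have hpf' : PairAt f x y j := hpf
  have hpl' : PairAt (f ++ [a₂, a₁]) x y j := pairAt_append_left hpf'
  have hjS : j ∈ S := ⟨f ++ [a₂, a₁], hlstar, hpl'⟩
  have hji : j = sInf S := le_antisymm hj (Nat.sInf_le hjS)
  have hflen : f.length = A.card - 2 := by
    rw [hfdef, restrict_length (hD.1.1 hlD),
      Finset.inter_eq_right.mpr (Finset.sdiff_subset),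
      Finset.card_sdiff_of_subset (by
        intro a ha
        simp only [Finset.mem_insert, Finset.mem_singleton] at ha
        rcases ha with rfl | rfl <;> assumption)]
    congr 1
    rw [Finset.card_insert_of_notMem (by simp [hne]), Finset.card_singleton]
  have hmmem : f ∈ bottom2Restrict A D a₁ a₂ := by
    refine ⟨f ++ [a₂, a₁], hlstar, concat2_getLast? _ _ _, ?_, ?_⟩
    · rw [← hflen]; exact get?_concat2_fst _ _ _
    · rw [restrict_append, restrict_eq_nil (l := [a₂, a₁]) (by simp), List.append_nil]
      symm
      apply restrict_eq_self
      intro a ha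
      have := List.mem_filter.mp (hfdef ▸ ha)
      simpa using this.2
  have hS' : S'.Nonempty := ⟨sInf S, f, hmmem, hji ▸ hpf'⟩
  have hsub : S' ⊆ S := by
    rintro i ⟨m, ⟨l', hl'D, hlast, hsec, rfl⟩, hpm⟩
    have hdec := bottom2_decomp (hD.1.1 hl'D) (by omega) hlast hsec
    refine ⟨l', hl'D, ?_⟩
    have hp2 := pairAt_append_left (t := [a₂, a₁]) hpm
    rw [← hdec] at hp2
    exact hp2
  refine ⟨hS, hS', le_antisymm (Nat.sInf_le (hsub (Nat.sInf_mem hS'))) ?_⟩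
  exact Nat.sInf_le (⟨f, hmmem, hji ▸ hpf'⟩ : sInf S ∈ S')
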